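/- Let (f(n)) be a sequence of reals such that Δf(n) = f(n+1) − f(n) is monotone, Δf(n) → 0, and n·|Δf(n)| → ∞ as n → ∞. Then (f(n)) is uniformly distributed modulo 1. -/

import Mathlib

open Filter

namespace UDAux

-- (p1 contents assumed; for compile test, include via copy later)


lemma tele (f : ℕ → ℝ) {p q : ℕ} (h : p ≤ q) :
    ∑ n ∈ Finset.Ico p q, (f (n + 1) - f n) = f q - f p := by
  rw [Finset.sum_Ico_eq_sub _ h, Finset.sum_range_sub, Finset.sum_range_sub]
  ring

lemma steps_lower (f : ℕ → ℝ) {p q : ℕ} (h : p ≤ q) {c : ℝ}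
    (hc : ∀ n, p ≤ n → n < q → c ≤ f (n + 1) - f n) :
    ((q : ℝ) - p) * c ≤ f q - f p := by
  have h1 : (Finset.Ico p q).card • c ≤ ∑ n ∈ Finset.Ico p q, (f (n + 1) - f n) :=
    Finset.card_nsmul_le_sum _ _ _ (fun n hn => by
      rw [Finset.mem_Ico] at hn; exact hc n hn.1 hn.2)
  rw [tele f h] at h1
  rw [Nat.card_Ico, nsmul_eq_mul, Nat.cast_sub h] at h1
  linarith

lemma steps_upper (f : ℕ → ℝ) {p q : ℕ} (h : p ≤ q) {C : ℝ}
    (hC : ∀ n, p ≤ n → n < q → f (n + 1) - f n ≤ C) :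
    f q - f p ≤ ((q : ℝ) - p) * C := by
  have h1 : ∑ n ∈ Finset.Ico p q, (f (n + 1) - f n) ≤ (Finset.Ico p q).card • C :=
    Finset.sum_le_card_nsmul _ _ _ (fun n hn => by
      rw [Finset.mem_Ico] at hn; exact hC n hn.1 hn.2)
  rw [tele f h] at h1
  rw [Nat.card_Ico, nsmul_eq_mul, Nat.cast_sub h] at h1
  linarith

lemma span_card (f : ℕ → ℝ) {P N : ℕ} {S : Finset ℕ} (hS : S ⊆ Finset.Ico P N)
    {d c L : ℝ} (hd : 0 < d) (hL : 0 ≤ L)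
    (hstep : ∀ n, P ≤ n → n + 1 < N → d ≤ f (n + 1) - f n)
    (hval : ∀ n ∈ S, c ≤ f n ∧ f n < c + L) :
    (S.card : ℝ) * d ≤ L + d := by
  rcases S.eq_empty_or_nonempty with rfl | hne
  · simp; positivity
  set p := S.min' hne with hp
  set q := S.max' hne with hq
  have hpS : p ∈ S := S.min'_mem hne
  have hqS : q ∈ S := S.max'_mem hne
  have hpq : p ≤ q := S.min'_le _ hqS
  have hcard : S.card ≤ q - p + 1 := by
    have : S ⊆ Finset.Icc p q := fun x hx =>
      Finset.mem_Icc.2 ⟨S.min'_le _ hx, S.le_max' _ hx⟩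
    have h2 := Finset.card_le_card this
    rw [Nat.card_Icc] at h2
    omega
  have hPp : P ≤ p := (Finset.mem_Ico.1 (hS hpS)).1
  have hqN : q < N := (Finset.mem_Ico.1 (hS hqS)).2
  have hlow : ((q : ℝ) - p) * d ≤ f q - f p :=
    steps_lower f hpq (fun n hn hn' => hstep n (le_trans hPp hn) (by omega))
  have hspan : f q - f p < L := by
    have h1 := hval p hpS
    have h2 := hval q hqS
    linarith
  have hcard' : (S.card : ℝ) ≤ (q : ℝ) - p + 1 := by
    have := (Nat.cast_le (α := ℝ)).2 hcard
    push_cast at this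
    rw [Nat.cast_sub hpq] at this
    · linarith
  nlinarith

lemma hits_lower (f : ℕ → ℝ) {P Q : ℕ} (hPQ : P < Q) {c L D : ℝ}
    (hD : 0 < D) (hDL : 2 * D ≤ L)
    (hmono : Monotone f)
    (hstep : ∀ n, P ≤ n → n < Q → 0 < f (n + 1) - f n ∧ f (n + 1) - f n ≤ D)
    (hstart : f P < c + D) (hend : c + L ≤ f Q) :
    L ≤ ((((Finset.Ico P Q).filter (fun n => f n ∈ Set.Ico c (c + L))).card : ℝ) + 1) * D := by
  classical
  set T₁ := (Finset.Icc P Q).filter (fun n => c ≤ f n) with hT₁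
  have hT₁ne : T₁.Nonempty := ⟨Q, by
    simp only [hT₁, Finset.mem_filter, Finset.mem_Icc]
    exact ⟨⟨le_of_lt hPQ, le_refl _⟩, by linarith⟩⟩
  set T₂ := (Finset.Icc P Q).filter (fun n => f n < c + L) with hT₂
  have hT₂ne : T₂.Nonempty := ⟨P, by
    simp only [hT₂, Finset.mem_filter, Finset.mem_Icc]
    exact ⟨⟨le_refl _, le_of_lt hPQ⟩, by linarith⟩⟩
  set n₁ := T₁.min' hT₁ne with hn₁
  set n₂ := T₂.max' hT₂ne with hn₂
  have hn₁mem : (P ≤ n₁ ∧ n₁ ≤ Q) ∧ c ≤ f n₁ := by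
    have h := Finset.mem_filter.1 (T₁.min'_mem hT₁ne)
    exact ⟨Finset.mem_Icc.1 h.1, h.2⟩
  have hn₂mem : (P ≤ n₂ ∧ n₂ ≤ Q) ∧ f n₂ < c + L := by
    have h := Finset.mem_filter.1 (T₂.max'_mem hT₂ne)
    exact ⟨Finset.mem_Icc.1 h.1, h.2⟩
  -- f n₁ < c + D
  have hfn₁ : f n₁ < c + D := by
    rcases eq_or_lt_of_le hn₁mem.1.1 with heq | hlt
    · rw [← heq]; exact hstart
    · have hm : n₁ - 1 ∉ T₁ := by
        intro hmem
        have := T₁.min'_le _ hmem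
        omega
      rw [hT₁] at hm
      rw [Finset.mem_filter, Finset.mem_Icc] at hm
      push_neg at hm
      have h1 : f (n₁ - 1) < c := hm ⟨by omega, by omega⟩
      have h2 := (hstep (n₁ - 1) (by omega) (by omega)).2
      have h3 : n₁ - 1 + 1 = n₁ := by omega
      rw [h3] at h2
      linarith
  have hn₂Q : n₂ < Q := by
    rcases eq_or_lt_of_le hn₂mem.1.2 with heq | hlt
    · exfalso; have := hn₂mem.2; rw [heq] at this; linarith
    · exact hlt
  -- f n₂ ≥ c + L - D
  have hfn₂ : c + L - D ≤ f n₂ := by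
    have hm : n₂ + 1 ∉ T₂ := by
      intro hmem
      have := T₂.le_max' _ hmem
      omega
    rw [hT₂] at hm
    rw [Finset.mem_filter, Finset.mem_Icc] at hm
    push_neg at hm
    have h1 : c + L ≤ f (n₂ + 1) := hm ⟨by omega, by omega⟩
    have h2 := (hstep n₂ hn₂mem.1.1 hn₂Q).2
    linarith
  have hn₁₂ : n₁ ≤ n₂ := by
    apply T₁.min'_le
    rw [hT₁]
    rw [Finset.mem_filter, Finset.mem_Icc]
    exact ⟨hn₂mem.1, by linarith⟩
  have hsub : Finset.Icc n₁ n₂ ⊆ (Finset.Ico P Q).filter (fun n => f n ∈ Set.Ico c (c + L)) := by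
    intro n hn
    rw [Finset.mem_Icc] at hn
    rw [Finset.mem_filter, Finset.mem_Ico]
    refine ⟨⟨le_trans hn₁mem.1.1 hn.1, lt_of_le_of_lt hn.2 hn₂Q⟩, ?_, ?_⟩
    · exact le_trans hn₁mem.2 (hmono hn.1)
    · exact lt_of_le_of_lt (hmono hn.2) hn₂mem.2
  have hcard : n₂ - n₁ + 1 ≤ ((Finset.Ico P Q).filter (fun n => f n ∈ Set.Ico c (c + L))).card := by
    have h2 := Finset.card_le_card hsub
    rw [Nat.card_Icc] at h2
    omega
  have hup : f n₂ - f n₁ ≤ ((n₂ : ℝ) - n₁) * D :=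
    steps_upper f hn₁₂ (fun n hn hn' =>
      (hstep n (le_trans hn₁mem.1.1 hn) (lt_trans hn' hn₂Q)).2)
  have hcard' : ((n₂ : ℝ) - n₁) + 1 ≤
      ((((Finset.Ico P Q).filter (fun n => f n ∈ Set.Ico c (c + L))).card : ℝ)) := by
    have := (Nat.cast_le (α := ℝ)).2 hcard
    push_cast at this
    rw [Nat.cast_sub hn₁₂] at this
    linarith
  nlinarith



noncomputable def cnt (f : ℕ → ℝ) (a b : ℝ) (M N : ℕ) : ℕ :=
  ((Finset.Ico M N).filter (fun n => Int.fract (f n) ∈ Set.Ico a b)).card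

lemma cnt_split (f : ℕ → ℝ) (a b : ℝ) {M P N : ℕ} (h1 : M ≤ P) (h2 : P ≤ N) :
    cnt f a b M N = cnt f a b M P + cnt f a b P N := by
  unfold cnt
  rw [← Finset.Ico_union_Ico_eq_Ico h1 h2, Finset.filter_union,
    Finset.card_union_of_disjoint]
  exact Finset.disjoint_filter_filter (Finset.Ico_disjoint_Ico_consecutive M P N)

lemma cnt_def (f : ℕ → ℝ) (a b : ℝ) (M N : ℕ) :
    cnt f a b M N
      = ((Finset.Ico M N).filter (fun n => Int.fract (f n) ∈ Set.Ico a b)).card := rfl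

attribute [irreducible] cnt

lemma core_start (f : ℕ → ℝ) {a b : ℝ} {M : ℕ}
    (ha : 0 ≤ a) (hab : a < b) (hb : b ≤ 1) (hmonof : Monotone f)
    (hpos : ∀ n, M ≤ n → 0 < f (n + 1) - f n)
    (hsmall : ∀ n, M ≤ n → f (n + 1) - f n ≤ (b - a) / 4)
    (hant : ∀ m n, M ≤ m → m ≤ n → f (n + 1) - f n ≤ f (m + 1) - f m) :
    ∀ N, M < N → (∃ k : ℤ, f (N - 1) < (k : ℝ) ∧ (k : ℝ) ≤ f N) →
      ((cnt f a b M N : ℝ) ≤ (b - a) * ((N : ℝ) - M) + 4 * (f N - f M)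
          + (b - a) / (f N - f (N - 1)) + 1
      ∧ (b - a) * ((N : ℝ) - M) ≤ (cnt f a b M N : ℝ) + 4 * (f N - f M)
          + (b - a) / (f N - f (N - 1)) + 1) := by
  intro N
  induction N using Nat.strong_induction_on with
  | _ N ih =>
  intro hMN hstart
  have hN1 : N - 1 + 1 = N := by omega
  obtain ⟨k, hkdef⟩ : ∃ k : ℤ, k = ⌊f (N - 1)⌋ := ⟨_, rfl⟩
  have hk1 : (k : ℝ) ≤ f (N - 1) := by rw [hkdef]; exact Int.floor_le _
  have hk2 : f (N - 1) < (k : ℝ) + 1 := by rw [hkdef]; exact Int.lt_floor_add_one _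
  have hNfull : (k : ℝ) + 1 ≤ f N := by
    obtain ⟨k', h1, h2⟩ := hstart
    have hkk : k + 1 ≤ k' := by
      have : (k : ℝ) < (k' : ℝ) := lt_of_le_of_lt hk1 h1
      exact_mod_cast Int.add_one_le_iff.2 (by exact_mod_cast this)
    calc (k : ℝ) + 1 ≤ (k' : ℝ) := by exact_mod_cast hkk
    _ ≤ f N := h2
  set d : ℝ := f N - f (N - 1) with hddef
  have hd : 0 < d := by
    rw [hddef]; have := hpos (N - 1) (by omega); rwa [hN1] at this
  have hdsmall : d ≤ (b - a) / 4 := by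
    rw [hddef]; have := hsmall (N - 1) (by omega); rwa [hN1] at this
  clear_value d
  have hba1 : b - a ≤ 1 := by linarith
  have hba0 : 0 < b - a := by linarith
  -- lap start P
  have hTne : ((Finset.Icc M (N - 1)).filter (fun n => (k : ℝ) ≤ f n)).Nonempty := ⟨N - 1, by
    rw [Finset.mem_filter, Finset.mem_Icc]
    exact ⟨⟨by omega, le_refl _⟩, hk1⟩⟩
  obtain ⟨P, hPT, hPle⟩ : ∃ p, p ∈ (Finset.Icc M (N - 1)).filter (fun n => (k : ℝ) ≤ f n) ∧
      ∀ q ∈ (Finset.Icc M (N - 1)).filter (fun n => (k : ℝ) ≤ f n), p ≤ q :=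
    ⟨_, Finset.min'_mem _ hTne, fun q hq => Finset.min'_le _ q hq⟩
  have hPmem : (M ≤ P ∧ P ≤ N - 1) ∧ (k : ℝ) ≤ f P := by
    have h := Finset.mem_filter.1 hPT
    exact ⟨Finset.mem_Icc.1 h.1, h.2⟩
  have hMP : M ≤ P := hPmem.1.1
  have hPN1 : P ≤ N - 1 := hPmem.1.2
  have hPk : (k : ℝ) ≤ f P := hPmem.2
  have hPN : P < N := by omega
  have hPmin : ∀ n, M ≤ n → n < P → f n < (k : ℝ) := by
    intro n h1 h2
    by_contra hcon
    push_neg at hcon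
    have : n ∈ (Finset.Icc M (N - 1)).filter (fun n => (k : ℝ) ≤ f n) := by
      rw [Finset.mem_filter, Finset.mem_Icc]
      exact ⟨⟨h1, by omega⟩, hcon⟩
    have := hPle _ this
    omega
  clear hPT hPle hTne
  have hlap : ∀ n, P ≤ n → n < N → (k : ℝ) ≤ f n ∧ f n < (k : ℝ) + 1 := by
    intro n h1 h2
    exact ⟨le_trans hPk (hmonof h1),
      lt_of_le_of_lt (hmonof (show n ≤ N - 1 by omega)) hk2⟩
  have hfr : ∀ n, P ≤ n → n < N →
      (Int.fract (f n) ∈ Set.Ico a b ↔ f n ∈ Set.Ico ((k : ℝ) + a) ((k : ℝ) + b)) := by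
    intro n h1 h2
    obtain ⟨hl1, hl2⟩ := hlap n h1 h2
    have hfl : ⌊f n⌋ = k := Int.floor_eq_iff.2 ⟨hl1, by push_cast; linarith⟩
    have hfrv : Int.fract (f n) = f n - (k : ℝ) := by
      rw [← Int.self_sub_floor, hfl]
    rw [hfrv]
    simp only [Set.mem_Ico]
    constructor
    · rintro ⟨u, v⟩; exact ⟨by linarith, by linarith⟩
    · rintro ⟨u, v⟩; exact ⟨by linarith, by linarith⟩
  -- count split
  have hsplit : cnt f a b M N = cnt f a b M P + cnt f a b P N :=
    cnt_split f a b hMP (le_of_lt hPN)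
  obtain ⟨h, hhdef⟩ : ∃ h : ℕ, h = cnt f a b P N := ⟨_, rfl⟩
  rw [← hhdef] at hsplit
  -- span upper bound for hits in [P,N)
  have hstepd : ∀ n, P ≤ n → n + 1 < N → d ≤ f (n + 1) - f n := by
    intro n h1 h2
    rw [hddef]
    have := hant n (N - 1) (le_trans hMP h1) (by omega)
    rwa [hN1] at this
  have hspan : (h : ℝ) * d ≤ (b - a) + d := by
    rw [hhdef, cnt_def]
    apply span_card f (Finset.filter_subset _ _) hd (le_of_lt hba0) hstepd
    intro n hn
    rw [Finset.mem_filter, Finset.mem_Ico] at hn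
    have := (hfr n hn.1.1 hn.1.2).1 hn.2
    rw [Set.mem_Ico] at this
    exact ⟨this.1, by linarith [this.2]⟩
  have hh_div : (h : ℝ) ≤ (b - a) / d + 1 := by
    rw [div_add' _ _ _ hd.ne', le_div_iff₀ hd]
    linarith only [hspan]
  -- lap length upper bound
  have hlen_up : ((N : ℝ) - P) * d ≤ 1 + d := by
    have hcast : ((N - 1 : ℕ) : ℝ) = (N : ℝ) - 1 := by
      have h1 : (1 : ℕ) ≤ N := by omega
      push_cast [Nat.cast_sub h1]
      ring
    have h1 : (((N - 1 : ℕ) : ℝ) - P) * d ≤ f (N - 1) - f P := by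
      apply steps_lower f hPN1
      intro n hn1 hn2
      exact hstepd n hn1 (by omega)
    rw [hcast] at h1
    have h2 : f (N - 1) - f P < 1 := by linarith only [hk2, hPk]
    linarith only [h1, h2, hd]
  have hNM : (M : ℝ) ≤ (N : ℝ) := by exact_mod_cast le_of_lt hMN
  have hfNM : 0 ≤ f N - f M := by
    have := hmonof (le_of_lt hMN); linarith
  by_cases hPM : P = M
  · -- base case: single lap
    have hc0 : cnt f a b M P = 0 := by rw [hPM, cnt_def]; simp
    have hcnt : (cnt f a b M N : ℝ) = (h : ℝ) := by
      rw [hsplit, hc0]; push_cast; ring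
    have hPMr : (P : ℝ) = (M : ℝ) := by exact_mod_cast hPM
    have hlow : (b - a) * ((N : ℝ) - M) ≤ (b - a) / d + 1 := by
      rw [div_add' _ _ _ hd.ne', le_div_iff₀ hd]
      rw [← hPMr]
      have e1 : (b - a) * (((N : ℝ) - P) * d) ≤ (b - a) * (1 + d) :=
        mul_le_mul_of_nonneg_left hlen_up hba0.le
      have e2 : (b - a) * d ≤ 1 * d := mul_le_mul_of_nonneg_right hba1 hd.le
      linarith only [e1, e2]
    constructor
    · rw [hcnt]
      have hpos1 : 0 ≤ (b - a) * ((N : ℝ) - M) := by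
        apply mul_nonneg (le_of_lt hba0); linarith only [hNM]
      linarith only [hh_div, hpos1, hfNM]
    · rw [hcnt]
      have hh0 : (0 : ℝ) ≤ (h : ℝ) := Nat.cast_nonneg _
      linarith only [hlow, hfNM, hh0]
  · -- recursive case
    have hMPlt : M < P := by omega
    have hP1 : P - 1 + 1 = P := by omega
    set D : ℝ := f P - f (P - 1) with hDdef
    have hD : 0 < D := by
      rw [hDdef]; have := hpos (P - 1) (by omega); rwa [hP1] at this
    have hDsmall : D ≤ (b - a) / 4 := by
      rw [hDdef]; have := hsmall (P - 1) (by omega); rwa [hP1] at this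
    have hdD : d ≤ D := by
      rw [hDdef, hddef]
      have := hant (P - 1) (N - 1) (by omega) (by omega)
      rwa [hP1, hN1] at this
    have hfP1 : f (P - 1) < (k : ℝ) := hPmin (P - 1) (by omega) (by omega)
    have hfPD : f P < (k : ℝ) + D := by
      have heq : f P = f (P - 1) + D := by rw [hDdef]; ring
      linarith
    clear_value D
    have hstepPN : ∀ n, P ≤ n → n < N → 0 < f (n + 1) - f n ∧ f (n + 1) - f n ≤ D := by
      intro n h1 h2
      constructor
      · exact hpos n (le_trans hMP h1)
      · rw [hDdef]
        have := hant (P - 1) n (by omega) (by omega)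
        rwa [hP1] at this
    -- hits lower bound
    have hlow : (b - a) ≤ ((h : ℝ) + 1) * D := by
      have h0 := hits_lower f (c := (k : ℝ) + a) (L := b - a) (D := D) hPN hD
        (by linarith) hmonof hstepPN
        (show f P < (k : ℝ) + a + D by linarith)
        (show (k : ℝ) + a + (b - a) ≤ f N by linarith)
      have hcongr : (Finset.Ico P N).filter
            (fun n => f n ∈ Set.Ico ((k : ℝ) + a) ((k : ℝ) + a + (b - a)))
          = (Finset.Ico P N).filter (fun n => Int.fract (f n) ∈ Set.Ico a b) := by
        apply Finset.filter_congr
        intro n hn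
        rw [Finset.mem_Ico] at hn
        have heq : (k : ℝ) + a + (b - a) = (k : ℝ) + b := by ring
        rw [heq]
        exact (hfr n hn.1 hn.2).symm
      rw [hcongr] at h0
      rw [hhdef, cnt_def]
      exact h0
    -- full lap length lower bound
    have hlenfull : 1 ≤ (((N : ℝ) - P) + 1) * D := by
      have hup : f N - f P ≤ ((N : ℝ) - P) * D := by
        apply steps_upper f (le_of_lt hPN)
        intro n h1 h2
        exact (hstepPN n h1 h2).2
      have hexp : (((N : ℝ) - P) + 1) * D = ((N : ℝ) - P) * D + D := by ring
      rw [hexp]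
      linarith only [hup, hfPD, hNfull]
    have hIH := ih P hPN hMPlt ⟨k, hfP1, hPk⟩
    rw [show f P - f (P - 1) = D from hDdef.symm] at hIH
    have hfNP : (1 : ℝ) / 2 ≤ f N - f P := by
      linarith only [hNfull, hfPD, hDsmall, hba1, hba0]
    have hfPM : 0 ≤ f P - f M := by
      have := hmonof hMP; linarith
    have hcnt : (cnt f a b M N : ℝ) = (cnt f a b M P : ℝ) + (h : ℝ) := by
      rw [hsplit]; push_cast; ring
    have hDdiv : (b - a) / D ≤ (b - a) * ((N : ℝ) - P) + 1 := by
      rw [div_le_iff₀ hD]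
      have e1 : (b - a) * 1 ≤ (b - a) * ((((N : ℝ) - P) + 1) * D) :=
        mul_le_mul_of_nonneg_left hlenfull hba0.le
      have e2 : (b - a) * D ≤ 1 * D := mul_le_mul_of_nonneg_right hba1 hD.le
      linarith only [e1, e2]
    have hring : (b - a) * ((P : ℝ) - M) + (b - a) * ((N : ℝ) - P)
        = (b - a) * ((N : ℝ) - M) := by ring
    constructor
    · rw [hcnt]
      linarith only [hIH.1, hh_div, hDdiv, hfNP, hfPM]
    · -- lower bound
      have hlD : (b - a) / D ≤ (h : ℝ) + 1 := by
        rw [div_le_iff₀ hD]; linarith only [hlow]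
      have hlenNP : (b - a) * ((N : ℝ) - P) ≤ (b - a) / d + 1 := by
        rw [div_add' _ _ _ hd.ne', le_div_iff₀ hd]
        have e1 : (b - a) * (((N : ℝ) - P) * d) ≤ (b - a) * (1 + d) :=
          mul_le_mul_of_nonneg_left hlen_up hba0.le
        have e2 : (b - a) * d ≤ 1 * d := mul_le_mul_of_nonneg_right hba1 hd.le
        linarith only [e1, e2]
      rw [hcnt]
      linarith only [hIH.2, hlD, hlenNP, hfNP, hfPM]


lemma core_est (f : ℕ → ℝ) {a b : ℝ} {M : ℕ}
    (ha : 0 ≤ a) (hab : a < b) (hb : b ≤ 1) (hmonof : Monotone f)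
    (hpos : ∀ n, M ≤ n → 0 < f (n + 1) - f n)
    (hsmall : ∀ n, M ≤ n → f (n + 1) - f n ≤ (b - a) / 4)
    (hant : ∀ m n, M ≤ m → m ≤ n → f (n + 1) - f n ≤ f (m + 1) - f m) :
    ∀ N, M < N →
      ((cnt f a b M N : ℝ) ≤ (b - a) * ((N : ℝ) - M) + 4 * (f N - f M)
          + 2 * ((b - a) / (f N - f (N - 1))) + 2
      ∧ (b - a) * ((N : ℝ) - M) ≤ (cnt f a b M N : ℝ) + 4 * (f N - f M)
          + 2 * ((b - a) / (f N - f (N - 1))) + 2) := by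
  intro N hMN
  have hN1 : N - 1 + 1 = N := by omega
  obtain ⟨k, hkdef⟩ : ∃ k : ℤ, k = ⌊f (N - 1)⌋ := ⟨_, rfl⟩
  have hk1 : (k : ℝ) ≤ f (N - 1) := by rw [hkdef]; exact Int.floor_le _
  have hk2 : f (N - 1) < (k : ℝ) + 1 := by rw [hkdef]; exact Int.lt_floor_add_one _
  set d : ℝ := f N - f (N - 1) with hddef
  have hd : 0 < d := by
    rw [hddef]; have := hpos (N - 1) (by omega); rwa [hN1] at this
  have hdsmall : d ≤ (b - a) / 4 := by
    rw [hddef]; have := hsmall (N - 1) (by omega); rwa [hN1] at this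
  clear_value d
  have hba1 : b - a ≤ 1 := by linarith
  have hba0 : 0 < b - a := by linarith
  have hTne : ((Finset.Icc M (N - 1)).filter (fun n => (k : ℝ) ≤ f n)).Nonempty := ⟨N - 1, by
    rw [Finset.mem_filter, Finset.mem_Icc]
    exact ⟨⟨by omega, le_refl _⟩, hk1⟩⟩
  obtain ⟨P, hPT, hPle⟩ : ∃ p, p ∈ (Finset.Icc M (N - 1)).filter (fun n => (k : ℝ) ≤ f n) ∧
      ∀ q ∈ (Finset.Icc M (N - 1)).filter (fun n => (k : ℝ) ≤ f n), p ≤ q :=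
    ⟨_, Finset.min'_mem _ hTne, fun q hq => Finset.min'_le _ q hq⟩
  have hPmem : (M ≤ P ∧ P ≤ N - 1) ∧ (k : ℝ) ≤ f P := by
    have h := Finset.mem_filter.1 hPT
    exact ⟨Finset.mem_Icc.1 h.1, h.2⟩
  have hMP : M ≤ P := hPmem.1.1
  have hPN1 : P ≤ N - 1 := hPmem.1.2
  have hPk : (k : ℝ) ≤ f P := hPmem.2
  have hPN : P < N := by omega
  have hPmin : ∀ n, M ≤ n → n < P → f n < (k : ℝ) := by
    intro n h1 h2
    by_contra hcon
    push_neg at hcon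
    have : n ∈ (Finset.Icc M (N - 1)).filter (fun n => (k : ℝ) ≤ f n) := by
      rw [Finset.mem_filter, Finset.mem_Icc]
      exact ⟨⟨h1, by omega⟩, hcon⟩
    have := hPle _ this
    omega
  clear hPT hPle hTne
  have hlap : ∀ n, P ≤ n → n < N → (k : ℝ) ≤ f n ∧ f n < (k : ℝ) + 1 := by
    intro n h1 h2
    exact ⟨le_trans hPk (hmonof h1),
      lt_of_le_of_lt (hmonof (show n ≤ N - 1 by omega)) hk2⟩
  have hfr : ∀ n, P ≤ n → n < N →
      (Int.fract (f n) ∈ Set.Ico a b ↔ f n ∈ Set.Ico ((k : ℝ) + a) ((k : ℝ) + b)) := by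
    intro n h1 h2
    obtain ⟨hl1, hl2⟩ := hlap n h1 h2
    have hfl : ⌊f n⌋ = k := Int.floor_eq_iff.2 ⟨hl1, by push_cast; linarith⟩
    have hfrv : Int.fract (f n) = f n - (k : ℝ) := by
      rw [← Int.self_sub_floor, hfl]
    rw [hfrv]
    simp only [Set.mem_Ico]
    constructor
    · rintro ⟨u, v⟩; exact ⟨by linarith, by linarith⟩
    · rintro ⟨u, v⟩; exact ⟨by linarith, by linarith⟩
  have hsplit : cnt f a b M N = cnt f a b M P + cnt f a b P N :=
    cnt_split f a b hMP (le_of_lt hPN)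
  obtain ⟨h, hhdef⟩ : ∃ h : ℕ, h = cnt f a b P N := ⟨_, rfl⟩
  rw [← hhdef] at hsplit
  have hstepd : ∀ n, P ≤ n → n + 1 < N → d ≤ f (n + 1) - f n := by
    intro n h1 h2
    rw [hddef]
    have := hant n (N - 1) (le_trans hMP h1) (by omega)
    rwa [hN1] at this
  have hspan : (h : ℝ) * d ≤ (b - a) + d := by
    rw [hhdef, cnt_def]
    apply span_card f (Finset.filter_subset _ _) hd (le_of_lt hba0) hstepd
    intro n hn
    rw [Finset.mem_filter, Finset.mem_Ico] at hn
    have := (hfr n hn.1.1 hn.1.2).1 hn.2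
    rw [Set.mem_Ico] at this
    exact ⟨this.1, by linarith [this.2]⟩
  have hh_div : (h : ℝ) ≤ (b - a) / d + 1 := by
    rw [div_add' _ _ _ hd.ne', le_div_iff₀ hd]
    linarith only [hspan]
  have hlen_up : ((N : ℝ) - P) * d ≤ 1 + d := by
    have hcast : ((N - 1 : ℕ) : ℝ) = (N : ℝ) - 1 := by
      have h1 : (1 : ℕ) ≤ N := by omega
      push_cast [Nat.cast_sub h1]
      ring
    have h1 : (((N - 1 : ℕ) : ℝ) - P) * d ≤ f (N - 1) - f P := by
      apply steps_lower f hPN1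
      intro n hn1 hn2
      exact hstepd n hn1 (by omega)
    rw [hcast] at h1
    have h2 : f (N - 1) - f P < 1 := by linarith only [hk2, hPk]
    linarith only [h1, h2, hd]
  have hlenNP : (b - a) * ((N : ℝ) - P) ≤ (b - a) / d + 1 := by
    rw [div_add' _ _ _ hd.ne', le_div_iff₀ hd]
    have e1 : (b - a) * (((N : ℝ) - P) * d) ≤ (b - a) * (1 + d) :=
      mul_le_mul_of_nonneg_left hlen_up hba0.le
    have e2 : (b - a) * d ≤ 1 * d := mul_le_mul_of_nonneg_right hba1 hd.le
    linarith only [e1, e2]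
  have hNM : (M : ℝ) ≤ (N : ℝ) := by exact_mod_cast le_of_lt hMN
  have hfNM : 0 ≤ f N - f M := by
    have := hmonof (le_of_lt hMN); linarith
  have hdiv0 : 0 ≤ (b - a) / d := by positivity
  by_cases hPM : P = M
  · have hc0 : cnt f a b M P = 0 := by rw [hPM, cnt_def]; simp
    have hcnt : (cnt f a b M N : ℝ) = (h : ℝ) := by
      rw [hsplit, hc0]; push_cast; ring
    have hPMr : (P : ℝ) = (M : ℝ) := by exact_mod_cast hPM
    have hlow : (b - a) * ((N : ℝ) - M) ≤ (b - a) / d + 1 := by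
      rw [← hPMr]; exact hlenNP
    constructor
    · rw [hcnt]
      have hpos1 : 0 ≤ (b - a) * ((N : ℝ) - M) := by
        apply mul_nonneg (le_of_lt hba0); linarith only [hNM]
      linarith only [hh_div, hpos1, hfNM, hdiv0]
    · rw [hcnt]
      have hh0 : (0 : ℝ) ≤ (h : ℝ) := Nat.cast_nonneg _
      linarith only [hlow, hfNM, hh0, hdiv0]
  · have hMPlt : M < P := by omega
    have hP1 : P - 1 + 1 = P := by omega
    set D : ℝ := f P - f (P - 1) with hDdef
    have hD : 0 < D := by
      rw [hDdef]; have := hpos (P - 1) (by omega); rwa [hP1] at this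
    have hdD : d ≤ D := by
      rw [hDdef, hddef]
      have := hant (P - 1) (N - 1) (by omega) (by omega)
      rwa [hP1, hN1] at this
    have hfP1 : f (P - 1) < (k : ℝ) := hPmin (P - 1) (by omega) (by omega)
    clear_value D
    have hIH := core_start f ha hab hb hmonof hpos hsmall hant P hMPlt ⟨k, hfP1, hPk⟩
    rw [show f P - f (P - 1) = D from hDdef.symm] at hIH
    have hDd : (b - a) / D ≤ (b - a) / d :=
      div_le_div_of_nonneg_left hba0.le hd hdD
    have hfPM : 0 ≤ f P - f M := by
      have := hmonof hMP; linarith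
    have hfNP : 0 ≤ f N - f P := by
      have := hmonof (le_of_lt hPN); linarith
    have hcnt : (cnt f a b M N : ℝ) = (cnt f a b M P : ℝ) + (h : ℝ) := by
      rw [hsplit]; push_cast; ring
    have hPNr : (P : ℝ) ≤ (N : ℝ) := by exact_mod_cast le_of_lt hPN
    have e3 : 0 ≤ (b - a) * ((N : ℝ) - P) := mul_nonneg hba0.le (by linarith only [hPNr])
    constructor
    · rw [hcnt]
      linarith only [hIH.1, hh_div, hDd, hfNP, e3]
    · have hh0 : (0 : ℝ) ≤ (h : ℝ) := Nat.cast_nonneg _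
      rw [hcnt]
      linarith only [hIH.2, hlenNP, hDd, hfNP, hh0]


lemma cnt_le (f : ℕ → ℝ) (a b : ℝ) (M N : ℕ) (h : M ≤ N) :
    (cnt f a b M N : ℝ) ≤ (N : ℝ) - M := by
  rw [cnt_def]
  have h1 : ((Finset.Ico M N).filter (fun n => Int.fract (f n) ∈ Set.Ico a b)).card
      ≤ N - M := by
    calc _ ≤ (Finset.Ico M N).card := Finset.card_filter_le _ _
    _ = N - M := Nat.card_Ico M N
  have h2 := (Nat.cast_le (α := ℝ)).2 h1
  rwa [Nat.cast_sub h] at h2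

theorem ud_incr (f : ℕ → ℝ)
    (hA : Antitone (fun n => f (n + 1) - f n))
    (hzero : Tendsto (fun n => f (n + 1) - f n) atTop (nhds 0))
    (hinf : Tendsto (fun n : ℕ => (n : ℝ) * |f (n + 1) - f n|) atTop atTop) :
    ∀ a b : ℝ, 0 ≤ a → a < b → b ≤ 1 →
      Tendsto (fun N : ℕ =>
          (((Finset.range N).filter (fun n => Int.fract (f n) ∈ Set.Ico a b)).card : ℝ) / N)
        atTop (nhds (b - a)) := by
  have hnn : ∀ n, 0 ≤ f (n + 1) - f n := by
    intro n
    apply le_of_tendsto hzero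
    filter_upwards [eventually_ge_atTop n] with m hm
    exact hA hm
  have hmonof : Monotone f := monotone_nat_of_le_succ (fun n => by linarith [hnn n])
  intro a b ha hab hb
  have hba0 : 0 < b - a := by linarith
  have hba1 : b - a ≤ 1 := by linarith
  -- choose M
  have h1 : ∀ᶠ n : ℕ in atTop, f (n + 1) - f n < (b - a) / 4 :=
    hzero.eventually_lt_const (by positivity)
  have h2 : ∀ᶠ n : ℕ in atTop, (1 : ℝ) ≤ (n : ℝ) * |f (n + 1) - f n| :=
    hinf.eventually_ge_atTop 1
  obtain ⟨M, hM⟩ := (h1.and h2).exists_forall_of_atTop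
  have hsmall : ∀ n, M ≤ n → f (n + 1) - f n ≤ (b - a) / 4 :=
    fun n hn => le_of_lt (hM n hn).1
  have hpos : ∀ n, M ≤ n → 0 < f (n + 1) - f n := by
    intro n hn
    rcases lt_or_eq_of_le (hnn n) with h | h
    · exact h
    · exfalso
      have := (hM n hn).2
      rw [← h] at this
      simp at this
      linarith
  have hant : ∀ m n, M ≤ m → m ≤ n → f (n + 1) - f n ≤ f (m + 1) - f m :=
    fun m n _ hmn => hA hmn
  -- the rewrite to cnt
  have hcntR : ∀ N : ℕ, (((Finset.range N).filter
      (fun n => Int.fract (f n) ∈ Set.Ico a b)).card : ℕ) = cnt f a b 0 N := by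
    intro N
    rw [cnt_def, Finset.range_eq_Ico]
  -- error bound
  set v : ℕ → ℝ := fun N =>
    (4 * (f N - f M) + 2 * ((b - a) / (f N - f (N - 1))) + 2 + 2 * M) / N with hvdef
  have key : ∀ N : ℕ, M + 1 ≤ N →
      |(((Finset.range N).filter (fun n => Int.fract (f n) ∈ Set.Ico a b)).card : ℝ) / N
        - (b - a)| ≤ v N := by
    intro N hN
    have hMN : M < N := by omega
    have hN0 : (0 : ℝ) < N := by
      have : (0 : ℕ) < N := by omega
      exact_mod_cast this
    obtain ⟨hu, hl⟩ := core_est f ha hab hb hmonof hpos hsmall hant N hMN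
    have hsplit0 : cnt f a b 0 N = cnt f a b 0 M + cnt f a b M N :=
      cnt_split f a b (Nat.zero_le M) (le_of_lt hMN)
    have hhead1 : (cnt f a b 0 M : ℝ) ≤ M := by
      have := cnt_le f a b 0 M (Nat.zero_le M)
      simpa using this
    have hhead0 : (0 : ℝ) ≤ (cnt f a b 0 M : ℝ) := Nat.cast_nonneg _
    have hbaM : (b - a) * (M : ℝ) ≤ (M : ℝ) := by
      have : (b - a) * (M : ℝ) ≤ 1 * (M : ℝ) :=
        mul_le_mul_of_nonneg_right hba1 (Nat.cast_nonneg _)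
      linarith
    have hbaM0 : 0 ≤ (b - a) * (M : ℝ) := mul_nonneg hba0.le (Nat.cast_nonneg _)
    have hcnteq : ((((Finset.range N).filter
        (fun n => Int.fract (f n) ∈ Set.Ico a b)).card : ℝ))
        = (cnt f a b 0 M : ℝ) + (cnt f a b M N : ℝ) := by
      have := hcntR N
      rw [this, hsplit0]
      push_cast
      ring
    have habs : |(cnt f a b 0 M : ℝ) + (cnt f a b M N : ℝ) - (b - a) * N|
        ≤ 4 * (f N - f M) + 2 * ((b - a) / (f N - f (N - 1))) + 2 + 2 * M := by
      rw [abs_le]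
      constructor
      · have hexp : (b - a) * (N : ℝ) = (b - a) * ((N : ℝ) - M) + (b - a) * M := by ring
        rw [hexp]
        linarith only [hl, hhead0, hbaM]
      · have hexp : (b - a) * (N : ℝ) = (b - a) * ((N : ℝ) - M) + (b - a) * M := by ring
        rw [hexp]
        linarith only [hu, hhead1, hbaM0]
    rw [hcnteq]
    have hdiveq : ((cnt f a b 0 M : ℝ) + (cnt f a b M N : ℝ)) / N - (b - a)
        = ((cnt f a b 0 M : ℝ) + (cnt f a b M N : ℝ) - (b - a) * N) / N := by
      field_simp
    rw [hdiveq, hvdef, abs_div, abs_of_pos hN0]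
    exact div_le_div_of_nonneg_right habs hN0.le
  -- v tends to 0
  have hinvN : Tendsto (fun N : ℕ => ((N : ℝ))⁻¹) atTop (nhds 0) :=
    tendsto_inv_atTop_nhds_zero_nat
  have t1 : Tendsto (fun N : ℕ => (f N - f M) / N) atTop (nhds 0) := by
    have hces := hzero.cesaro
    have hces' : Tendsto (fun N : ℕ => (f N - f 0) * ((N : ℝ))⁻¹) atTop (nhds 0) := by
      apply hces.congr
      intro N
      rw [Finset.sum_range_sub]
      ring
    have hconst : Tendsto (fun N : ℕ => (f M - f 0) * ((N : ℝ))⁻¹) atTop (nhds 0) := by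
      have := hinvN.const_mul (f M - f 0)
      simpa using this
    have := hces'.sub hconst
    simp only [sub_zero] at this
    apply this.congr
    intro N
    ring
  have hg : Tendsto (fun N : ℕ => (N : ℝ) * (f N - f (N - 1))) atTop atTop := by
    have base := hinf.comp (tendsto_sub_atTop_nat 1)
    apply tendsto_atTop_mono' atTop _ base
    filter_upwards [eventually_ge_atTop (M + 1)] with N hN
    have hN1 : N - 1 + 1 = N := by omega
    simp only [Function.comp_apply]
    rw [hN1]
    have hd0 : 0 ≤ f N - f (N - 1) := by
      have := hnn (N - 1); rwa [hN1] at this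
    rw [abs_of_nonneg hd0]
    have hle : ((N - 1 : ℕ) : ℝ) ≤ (N : ℝ) := by
      exact_mod_cast (by omega : (N - 1 : ℕ) ≤ N)
    exact mul_le_mul_of_nonneg_right hle hd0
  have t2 : Tendsto (fun N : ℕ => ((b - a) / (f N - f (N - 1))) / N) atTop (nhds 0) := by
    have hginv := hg.inv_tendsto_atTop
    have := hginv.const_mul (b - a)
    rw [mul_zero] at this
    apply Tendsto.congr' _ this
    filter_upwards [eventually_ge_atTop (M + 1)] with N hN
    have hN1 : N - 1 + 1 = N := by omega
    have hd : 0 < f N - f (N - 1) := by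
      have := hpos (N - 1) (by omega); rwa [hN1] at this
    have hN0 : (0 : ℝ) < N := by
      have : (0 : ℕ) < N := by omega
      exact_mod_cast this
    rw [Pi.inv_apply, div_div, div_eq_mul_inv, mul_comm (f N - f (N - 1)) ((N : ℝ))]
  have t3 : Tendsto (fun N : ℕ => ((2 : ℝ) + 2 * M) / N) atTop (nhds 0) := by
    have := hinvN.const_mul ((2 : ℝ) + 2 * M)
    rw [mul_zero] at this
    apply this.congr
    intro N
    rw [div_eq_mul_inv]
  have hv : Tendsto v atTop (nhds 0) := by
    have : Tendsto (fun N : ℕ => 4 * ((f N - f M) / N)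
        + 2 * (((b - a) / (f N - f (N - 1))) / N) + ((2 : ℝ) + 2 * M) / N) atTop (nhds 0) := by
      have e1 := (t1.const_mul 4).add (t2.const_mul 2)
      have e2 := e1.add t3
      simpa using e2
    apply this.congr
    intro N
    rw [hvdef]
    ring
  have hfinal : Tendsto (fun N : ℕ =>
      (((Finset.range N).filter (fun n => Int.fract (f n) ∈ Set.Ico a b)).card : ℝ) / N
        - (b - a)) atTop (nhds 0) := by
    apply squeeze_zero_norm' _ hv
    filter_upwards [eventually_ge_atTop (M + 1)] with N hN
    rw [Real.norm_eq_abs]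
    exact key N hN
  exact tendsto_sub_nhds_zero_iff.1 hfinal


lemma card_union4_le (X Y Z W : Finset ℕ) :
    (((X ∪ Y) ∪ Z) ∪ W).card ≤ X.card + Y.card + Z.card + W.card := by
  calc (((X ∪ Y) ∪ Z) ∪ W).card ≤ ((X ∪ Y) ∪ Z).card + W.card := Finset.card_union_le _ _
  _ ≤ ((X ∪ Y).card + Z.card) + W.card := Nat.add_le_add_right (Finset.card_union_le _ _) _
  _ ≤ ((X.card + Y.card) + Z.card) + W.card :=
      Nat.add_le_add_right (Nat.add_le_add_right (Finset.card_union_le _ _) _) _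

lemma tendsto_sandwich_counts (u B E1 E2 E3 : ℕ → ℕ) (l : ℝ)
    (hle1 : ∀ N, u N ≤ B N + E1 N + E2 N + E3 N)
    (hle2 : ∀ N, B N ≤ u N + E1 N + E2 N + E3 N)
    (hB : Tendsto (fun N : ℕ => (B N : ℝ) / N) atTop (nhds l))
    (h1 : Tendsto (fun N : ℕ => (E1 N : ℝ) / N) atTop (nhds 0))
    (h2 : Tendsto (fun N : ℕ => (E2 N : ℝ) / N) atTop (nhds 0))
    (h3 : Tendsto (fun N : ℕ => (E3 N : ℝ) / N) atTop (nhds 0)) :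
    Tendsto (fun N : ℕ => (u N : ℝ) / N) atTop (nhds l) := by
  have hlo : Tendsto (fun N : ℕ => (B N : ℝ) / N
      - ((E1 N : ℝ) / N + (E2 N : ℝ) / N + (E3 N : ℝ) / N)) atTop (nhds l) := by
    have := hB.sub ((h1.add h2).add h3)
    simpa using this
  have hup : Tendsto (fun N : ℕ => (B N : ℝ) / N
      + ((E1 N : ℝ) / N + (E2 N : ℝ) / N + (E3 N : ℝ) / N)) atTop (nhds l) := by
    have := hB.add ((h1.add h2).add h3)
    simpa using this
  apply tendsto_of_tendsto_of_tendsto_of_le_of_le hlo hup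
  · intro N
    rcases Nat.eq_zero_or_pos N with rfl | hN
    · simp
    · have hN0 : (0 : ℝ) < N := by exact_mod_cast hN
      have hc : (B N : ℝ) ≤ (u N : ℝ) + (E1 N : ℝ) + (E2 N : ℝ) + (E3 N : ℝ) := by
        exact_mod_cast hle2 N
      have hd := div_le_div_of_nonneg_right hc hN0.le
      have he : ((u N : ℝ) + (E1 N : ℝ) + (E2 N : ℝ) + (E3 N : ℝ)) / N
          = (u N : ℝ) / N + ((E1 N : ℝ) / N + (E2 N : ℝ) / N + (E3 N : ℝ) / N) := by
        ring
      rw [he] at hd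
      linarith
  · intro N
    rcases Nat.eq_zero_or_pos N with rfl | hN
    · simp
    · have hN0 : (0 : ℝ) < N := by exact_mod_cast hN
      have hc : (u N : ℝ) ≤ (B N : ℝ) + (E1 N : ℝ) + (E2 N : ℝ) + (E3 N : ℝ) := by
        exact_mod_cast hle1 N
      have hd := div_le_div_of_nonneg_right hc hN0.le
      have he : ((B N : ℝ) + (E1 N : ℝ) + (E2 N : ℝ) + (E3 N : ℝ)) / N
          = (B N : ℝ) / N + ((E1 N : ℝ) / N + (E2 N : ℝ) / N + (E3 N : ℝ) / N) := by
        ring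
      rw [he] at hd
      linarith

lemma level (g : ℕ → ℝ)
    (h : ∀ a b : ℝ, 0 ≤ a → a < b → b ≤ 1 →
      Tendsto (fun N : ℕ =>
          (((Finset.range N).filter (fun n => Int.fract (g n) ∈ Set.Ico a b)).card : ℝ) / N)
        atTop (nhds (b - a)))
    (c : ℝ) :
    Tendsto (fun N : ℕ =>
        (((Finset.range N).filter (fun n => Int.fract (g n) = c)).card : ℝ) / N)
      atTop (nhds 0) := by
  by_cases hc : 0 ≤ c ∧ c < 1
  · rw [NormedAddCommGroup.tendsto_nhds_zero]
    intro ε hε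
    have hcb' : c < min (c + ε / 2) 1 := lt_min (by linarith) hc.2
    have hb'1 : min (c + ε / 2) 1 ≤ 1 := min_le_right _ _
    have hb'c : min (c + ε / 2) 1 - c < ε := by
      have := min_le_left (c + ε / 2) 1
      linarith
    have ht := h c (min (c + ε / 2) 1) hc.1 hcb' hb'1
    have hev := ht.eventually_lt_const hb'c
    filter_upwards [hev] with N hN
    rw [Real.norm_eq_abs, abs_of_nonneg (by positivity)]
    have hsub : (Finset.range N).filter (fun n => Int.fract (g n) = c)
        ⊆ (Finset.range N).filter (fun n => Int.fract (g n) ∈ Set.Ico c (min (c + ε / 2) 1)) := by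
      intro n hn
      rw [Finset.mem_filter] at hn ⊢
      exact ⟨hn.1, by rw [hn.2]; exact ⟨le_refl _, hcb'⟩⟩
    have hcard : ((((Finset.range N).filter (fun n => Int.fract (g n) = c)).card : ℝ))
        ≤ (((Finset.range N).filter
            (fun n => Int.fract (g n) ∈ Set.Ico c (min (c + ε / 2) 1))).card : ℝ) := by
      exact_mod_cast Finset.card_le_card hsub
    have hdiv : ((((Finset.range N).filter (fun n => Int.fract (g n) = c)).card : ℝ)) / N
        ≤ (((Finset.range N).filter
            (fun n => Int.fract (g n) ∈ Set.Ico c (min (c + ε / 2) 1))).card : ℝ) / N := by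
      rw [div_eq_mul_inv, div_eq_mul_inv]
      exact mul_le_mul_of_nonneg_right hcard (inv_nonneg.2 (Nat.cast_nonneg _))
    exact lt_of_le_of_lt hdiv hN
  · have hempty : ∀ N : ℕ, (Finset.range N).filter (fun n => Int.fract (g n) = c) = ∅ := by
      intro N
      apply Finset.filter_false_of_mem
      intro n _
      intro heq
      apply hc
      rw [← heq]
      exact ⟨Int.fract_nonneg _, Int.fract_lt_one _⟩
    have heq0 : (fun N : ℕ =>
        (((Finset.range N).filter (fun n => Int.fract (g n) = c)).card : ℝ) / N)
        = fun N : ℕ => (0 : ℝ) := by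
      funext N
      rw [hempty N]
      simp
    rw [heq0]
    exact tendsto_const_nhds

lemma refl_ud (f : ℕ → ℝ)
    (h : ∀ a b : ℝ, 0 ≤ a → a < b → b ≤ 1 →
      Tendsto (fun N : ℕ =>
          (((Finset.range N).filter
            (fun n => Int.fract ((fun m => -f m) n) ∈ Set.Ico a b)).card : ℝ) / N)
        atTop (nhds (b - a))) :
    ∀ a b : ℝ, 0 ≤ a → a < b → b ≤ 1 →
      Tendsto (fun N : ℕ =>
          (((Finset.range N).filter (fun n => Int.fract (f n) ∈ Set.Ico a b)).card : ℝ) / N)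
        atTop (nhds (b - a)) := by
  intro a b ha hab hb
  set g : ℕ → ℝ := fun m => -f m with hgdef
  have hptA : ∀ n : ℕ, Int.fract (f n) ∈ Set.Ico a b →
      (Int.fract (g n) ∈ Set.Ico (1 - b) (1 - a) ∨ Int.fract (g n) = 0
        ∨ Int.fract (g n) = 1 - b ∨ Int.fract (g n) = 1 - a) := by
    intro n hn
    rw [Set.mem_Ico] at hn
    by_cases h0 : Int.fract (f n) = 0
    · right; left
      exact Int.fract_neg_eq_zero.2 h0
    · have hneg : Int.fract (g n) = 1 - Int.fract (f n) := Int.fract_neg h0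
      by_cases h1a : Int.fract (g n) = 1 - a
      · right; right; right; exact h1a
      · left
        rw [Set.mem_Ico, hneg]
        constructor
        · linarith [hn.2]
        · rcases lt_or_eq_of_le (hn.1) with hlt | heq
          · linarith
          · exfalso; apply h1a; rw [hneg, ← heq]
  have hptB : ∀ n : ℕ, Int.fract (g n) ∈ Set.Ico (1 - b) (1 - a) →
      (Int.fract (f n) ∈ Set.Ico a b ∨ Int.fract (g n) = 0
        ∨ Int.fract (g n) = 1 - b ∨ Int.fract (g n) = 1 - a) := by
    intro n hn
    rw [Set.mem_Ico] at hn
    by_cases h0 : Int.fract (g n) = 0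
    · right; left; exact h0
    · by_cases h1b : Int.fract (g n) = 1 - b
      · right; right; left; exact h1b
      · left
        have hfg : f n = -(g n) := by rw [hgdef]; simp
        have hneg : Int.fract (f n) = 1 - Int.fract (g n) := by
          rw [hfg]; exact Int.fract_neg h0
        rw [Set.mem_Ico, hneg]
        constructor
        · linarith [hn.2]
        · rcases lt_or_eq_of_le (hn.1) with hlt | heq
          · linarith
          · exfalso; apply h1b; rw [← heq]
  have hle1 : ∀ N : ℕ,
      ((Finset.range N).filter (fun n => Int.fract (f n) ∈ Set.Ico a b)).card
        ≤ ((Finset.range N).filter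
            (fun n => Int.fract (g n) ∈ Set.Ico (1 - b) (1 - a))).card
          + ((Finset.range N).filter (fun n => Int.fract (g n) = 0)).card
          + ((Finset.range N).filter (fun n => Int.fract (g n) = 1 - b)).card
          + ((Finset.range N).filter (fun n => Int.fract (g n) = 1 - a)).card := by
    intro N
    have hsub : (Finset.range N).filter (fun n => Int.fract (f n) ∈ Set.Ico a b)
        ⊆ ((((Finset.range N).filter (fun n => Int.fract (g n) ∈ Set.Ico (1 - b) (1 - a))
          ∪ (Finset.range N).filter (fun n => Int.fract (g n) = 0))
          ∪ (Finset.range N).filter (fun n => Int.fract (g n) = 1 - b))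
          ∪ (Finset.range N).filter (fun n => Int.fract (g n) = 1 - a)) := by
      intro n hn
      rw [Finset.mem_filter] at hn
      have := hptA n hn.2
      simp only [Finset.mem_union, Finset.mem_filter]
      tauto
    exact le_trans (Finset.card_le_card hsub) (card_union4_le _ _ _ _)
  have hle2 : ∀ N : ℕ,
      ((Finset.range N).filter
          (fun n => Int.fract (g n) ∈ Set.Ico (1 - b) (1 - a))).card
        ≤ ((Finset.range N).filter (fun n => Int.fract (f n) ∈ Set.Ico a b)).card
          + ((Finset.range N).filter (fun n => Int.fract (g n) = 0)).card
          + ((Finset.range N).filter (fun n => Int.fract (g n) = 1 - b)).card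
          + ((Finset.range N).filter (fun n => Int.fract (g n) = 1 - a)).card := by
    intro N
    have hsub : (Finset.range N).filter (fun n => Int.fract (g n) ∈ Set.Ico (1 - b) (1 - a))
        ⊆ ((((Finset.range N).filter (fun n => Int.fract (f n) ∈ Set.Ico a b)
          ∪ (Finset.range N).filter (fun n => Int.fract (g n) = 0))
          ∪ (Finset.range N).filter (fun n => Int.fract (g n) = 1 - b))
          ∪ (Finset.range N).filter (fun n => Int.fract (g n) = 1 - a)) := by
      intro n hn
      rw [Finset.mem_filter] at hn
      have := hptB n hn.2
      simp only [Finset.mem_union, Finset.mem_filter]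
      tauto
    exact le_trans (Finset.card_le_card hsub) (card_union4_le _ _ _ _)
  have hB : Tendsto (fun N : ℕ =>
      (((Finset.range N).filter
        (fun n => Int.fract (g n) ∈ Set.Ico (1 - b) (1 - a))).card : ℝ) / N)
      atTop (nhds ((1 - a) - (1 - b))) :=
    h (1 - b) (1 - a) (by linarith) (by linarith) (by linarith)
  have hB' : Tendsto (fun N : ℕ =>
      (((Finset.range N).filter
        (fun n => Int.fract (g n) ∈ Set.Ico (1 - b) (1 - a))).card : ℝ) / N)
      atTop (nhds (b - a)) := by
    have heq : (1 - a) - (1 - b) = b - a := by ring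
    rwa [heq] at hB
  have hE1 := level g h 0
  have hE2 := level g h (1 - b)
  have hE3 := level g h (1 - a)
  exact tendsto_sandwich_counts _ _ _ _ _ _ hle1 hle2 hB' hE1 hE2 hE3

end UDAux

/-- `(x n)` is uniformly distributed mod 1. -/
def UDMod1 (x : ℕ → ℝ) : Prop :=
  ∀ a b : ℝ, 0 ≤ a → a < b → b ≤ 1 →
    Tendsto (fun N : ℕ =>
        (((Finset.range N).filter (fun n => Int.fract (x n) ∈ Set.Ico a b)).card : ℝ) / N)
      atTop (nhds (b - a))

theorem udMod1_of_difference (f : ℕ → ℝ)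
    (hmono : Monotone (fun n => f (n + 1) - f n) ∨ Antitone (fun n => f (n + 1) - f n))
    (hzero : Tendsto (fun n => f (n + 1) - f n) atTop (nhds 0))
    (hinf : Tendsto (fun n : ℕ => (n : ℝ) * |f (n + 1) - f n|) atTop atTop) :
    UDMod1 f := by
  intro a b ha hab hb
  rcases hmono with hMono | hAnti
  · -- difference is monotone increasing; pass to -f
    have hA' : Antitone (fun n => (fun m => -f m) (n + 1) - (fun m => -f m) n) := by
      intro m n hmn
      simp only
      have := hMono hmn
      simp only at this
      linarith
    have hz' : Tendsto (fun n => (fun m => -f m) (n + 1) - (fun m => -f m) n)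
        atTop (nhds 0) := by
      have hz := hzero.neg
      rw [neg_zero] at hz
      apply hz.congr
      intro n
      simp only
      ring
    have hi' : Tendsto (fun n : ℕ =>
        (n : ℝ) * |(fun m => -f m) (n + 1) - (fun m => -f m) n|) atTop atTop := by
      apply hinf.congr
      intro n
      simp only
      rw [show -f (n + 1) - -f n = -(f (n + 1) - f n) by ring, abs_neg]
    exact UDAux.refl_ud f (UDAux.ud_incr _ hA' hz' hi') a b ha hab hb
  · exact UDAux.ud_incr f hAnti hzero hinf a b ha hab hb
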